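/- arXiv:0710.1912 — 6 statements merged into one kernel-verified Lean document; each statement's English description precedes it below -/
import Mathlib

section
/- Let A be a Noetherian ring, M = ⊕_{i=1}^n A e_i a free A-module of rank n, and ω_1, …, ω_r ∈ M. Write ω_1 ∧ ⋯ ∧ ω_r = Σ_{1 ≤ i_1 < ⋯ < i_r ≤ n} a_{i_1,…,i_r} e_{i_1} ∧ ⋯ ∧ e_{i_r} and let 𝔞 ⊆ A be the ideal generated by all the coefficients a_{i_1,…,i_r}. For each p set Z^p = {φ ∈ Λ^p M : ω_1 ∧ ⋯ ∧ ω_r ∧ φ = 0}, B^p = Σ_{k=1}^r ω_k ∧ Λ^{p-1} M, and H^p = Z^p / B^p. Then there exists an integer ν ≥ 0 such that 𝔞^ν · H^p = 0 for all 0 ≤ p ≤ n. -/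
/-!
de Rham–Saito lemma, part (1): there is a power of the ideal of coefficients of
`ω₁ ∧ ⋯ ∧ ω_r` annihilating all the cohomology modules `H^p = Z^p / B^p`.

We take `M = Fin n → A` with its standard basis, and work inside the exterior
algebra of `M`, where `⋀[A]^p M` is the `p`-th exterior power.
-/

noncomputable section

/-- The element `ω₁ ∧ ⋯ ∧ ω_r` of the exterior algebra. -/
def omegaWedge (A : Type*) [CommRing A] (n r : ℕ) (ω : Fin r → (Fin n → A)) :
    ExteriorAlgebra A (Fin n → A) :=
  (List.ofFn fun k => ExteriorAlgebra.ι A (ω k)).prod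

/-- The ideal `𝔞` generated by the coefficients `a_{i₁,…,i_r}` of `ω₁ ∧ ⋯ ∧ ω_r`
with respect to the standard basis of `⋀^r M`; the coefficient attached to
`e_{i₁} ∧ ⋯ ∧ e_{i_r}` (for `i₁ < ⋯ < i_r`) is the minor `det (ω_k(i_j))_{k,j}`. -/
def coeffIdeal (A : Type*) [CommRing A] (n r : ℕ) (ω : Fin r → (Fin n → A)) : Ideal A :=
  Ideal.span {a | ∃ ι : Fin r → Fin n, StrictMono ι ∧
    a = Matrix.det (Matrix.of fun k j => ω k (ι j))}

/-- `Z^p = {φ ∈ ⋀^p M ∣ ω₁ ∧ ⋯ ∧ ω_r ∧ φ = 0}`. -/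
def Zcycle (A : Type*) [CommRing A] (n r : ℕ) (ω : Fin r → (Fin n → A)) (p : ℕ) :
    Set (ExteriorAlgebra A (Fin n → A)) :=
  {φ | φ ∈ ⋀[A]^p (Fin n → A) ∧ omegaWedge A n r ω * φ = 0}

/-- `B^p = Σ_{k=1}^r ω_k ∧ ⋀^{p-1} M` (and `B^0 = 0`). -/
def Bbound (A : Type*) [CommRing A] (n r : ℕ) (ω : Fin r → (Fin n → A)) :
    ℕ → Submodule A (ExteriorAlgebra A (Fin n → A))
  | 0 => ⊥
  | p + 1 => Submodule.span A
      {x | ∃ k : Fin r, ∃ ψ ∈ ⋀[A]^p (Fin n → A), x = ExteriorAlgebra.ι A (ω k) * ψ}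

/-! ### Auxiliary machinery -/

namespace DeRhamSaitoAux

variable {A : Type*} [CommRing A] {M : Type*} [AddCommGroup M] [Module A M]

/-- The wedge product `ι u₀ * ⋯ * ι u_{t-1}`. -/
def wprod {t : ℕ} (u : Fin t → M) : ExteriorAlgebra A M :=
  (List.ofFn fun i => ExteriorAlgebra.ι A (u i)).prod

lemma wprod_zero (u : Fin 0 → M) : wprod (A := A) u = 1 := by
  simp [wprod]

lemma wprod_succ {t : ℕ} (u : Fin (t + 1) → M) :
    wprod (A := A) u = ExteriorAlgebra.ι A (u 0) * wprod (fun i => u i.succ) := by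
  simp [wprod, List.ofFn_succ]

lemma lam_def (q : ℕ) :
    ⋀[A]^q M = LinearMap.range (ExteriorAlgebra.ι A : M →ₗ[A] ExteriorAlgebra A M) ^ q := rfl

lemma lam_mem_of_eq {a b : ℕ} (h : a = b) {x : ExteriorAlgebra A M} (hx : x ∈ ⋀[A]^a M) :
    x ∈ ⋀[A]^b M := by subst h; exact hx

lemma mem_wedge_mul {a b : ℕ} {x y : ExteriorAlgebra A M} (hx : x ∈ ⋀[A]^a M)
    (hy : y ∈ ⋀[A]^b M) : x * y ∈ ⋀[A]^(a + b) M := by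
  have : x * y ∈ (LinearMap.range (ExteriorAlgebra.ι A : M →ₗ[A] ExteriorAlgebra A M)) ^ a *
      (LinearMap.range (ExteriorAlgebra.ι A : M →ₗ[A] ExteriorAlgebra A M)) ^ b :=
    Submodule.mul_mem_mul hx hy
  rwa [← pow_add] at this

lemma ι_mem (w : M) : ExteriorAlgebra.ι A w ∈ ⋀[A]^1 M := by
  rw [lam_def, pow_one]
  exact LinearMap.mem_range_self _ _

lemma wprod_mem {t : ℕ} (u : Fin t → M) : wprod (A := A) u ∈ ⋀[A]^t M := by
  induction t with
  | zero =>
    rw [wprod_zero, lam_def, pow_zero]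
    exact Submodule.mem_one.mpr ⟨1, map_one _⟩
  | succ t ih =>
    rw [wprod_succ]
    exact lam_mem_of_eq (Nat.add_comm 1 t) (mem_wedge_mul (ι_mem _) (ih _))

lemma contract_lam0 (ξ : Module.Dual A M) {x : ExteriorAlgebra A M} (hx : x ∈ ⋀[A]^0 M) :
    CliffordAlgebra.contractLeft ξ x = 0 := by
  rw [lam_def, pow_zero] at hx
  obtain ⟨c, rfl⟩ := Submodule.mem_one.mp hx
  exact CliffordAlgebra.contractLeft_algebraMap (Q := (0 : QuadraticForm A M)) ξ c

lemma contract_deg (ξ : Module.Dual A M) :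
    ∀ (q : ℕ) {x : ExteriorAlgebra A M}, x ∈ ⋀[A]^q M →
      CliffordAlgebra.contractLeft ξ x ∈ ⋀[A]^(q - 1) M := by
  intro q
  induction q with
  | zero =>
    intro x hx
    rw [contract_lam0 ξ hx]
    exact zero_mem _
  | succ q ih =>
    intro x hx
    rw [lam_def, pow_succ'] at hx
    refine Submodule.mul_induction_on hx ?_ ?_
    · rintro m ⟨w, rfl⟩ y hy
      rw [CliffordAlgebra.contractLeft_ι_mul]
      refine sub_mem (Submodule.smul_mem _ _ hy) ?_
      cases q with
      | zero =>
        rw [contract_lam0 ξ hy, mul_zero]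
        exact zero_mem _
      | succ q' =>
        have h1 := ih hy
        have h2 := mem_wedge_mul (ι_mem (A := A) w) h1
        exact lam_mem_of_eq (by omega) h2
    · intro a b ha hb
      rw [map_add]
      exact add_mem ha hb

/-- Iterated contraction: apply `ξ 0` first, then `ξ 1`, etc. -/
def Cfold : ∀ {s : ℕ}, (Fin s → Module.Dual A M) →
    ExteriorAlgebra A M →ₗ[A] ExteriorAlgebra A M
  | 0, _ => LinearMap.id
  | _ + 1, ξ => Cfold (fun i => ξ i.succ) ∘ₗ CliffordAlgebra.contractLeft (ξ 0)

@[simp] lemma Cfold_zero (ξ : Fin 0 → Module.Dual A M) (z : ExteriorAlgebra A M) :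
    Cfold ξ z = z := rfl

lemma Cfold_succ {s : ℕ} (ξ : Fin (s + 1) → Module.Dual A M) (z : ExteriorAlgebra A M) :
    Cfold ξ z = Cfold (fun i => ξ i.succ) (CliffordAlgebra.contractLeft (ξ 0) z) := rfl

/-- The basic expansion formula for contracting a wedge of `ι`'s times an arbitrary element. -/
lemma contract_wprod_mul (ξ : Module.Dual A M) :
    ∀ {t : ℕ} (u : Fin (t + 1) → M) (y : ExteriorAlgebra A M),
    CliffordAlgebra.contractLeft ξ (wprod u * y) =
      (∑ k : Fin (t + 1), ((-1 : A) ^ (k : ℕ) * ξ (u k)) • (wprod (u ∘ k.succAbove) * y))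
      + ((-1 : A) ^ (t + 1)) • (wprod u * CliffordAlgebra.contractLeft ξ y) := by
  intro t
  induction t with
  | zero =>
    intro u y
    have h0 : u ∘ (0 : Fin 1).succAbove = fun i => u i.succ := by
      funext i
      exact absurd i.2 (by omega)
    rw [Fin.sum_univ_one, h0, wprod_succ u]
    have : wprod (A := A) (fun i : Fin 0 => u i.succ) = 1 := wprod_zero _
    rw [this, mul_one, CliffordAlgebra.contractLeft_ι_mul]
    simp [sub_eq_add_neg]
  | succ t ih =>
    intro u y
    have h0 : u ∘ (0 : Fin (t + 2)).succAbove = fun i => u i.succ := by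
      funext i
      simp [Fin.zero_succAbove]
    have hsk : ∀ k : Fin (t + 1), wprod (A := A) (u ∘ (k.succ).succAbove)
        = ExteriorAlgebra.ι A (u 0) * wprod ((fun i => u i.succ) ∘ k.succAbove) := by
      intro k
      rw [wprod_succ]
      congr 1
      · congr 1
        funext i
        simp [Fin.succ_succAbove_succ]
    rw [wprod_succ, mul_assoc, CliffordAlgebra.contractLeft_ι_mul, ih]
    conv_rhs => rw [Fin.sum_univ_succ, h0]
    simp only [hsk, Fin.val_zero, pow_zero, one_mul, Fin.val_succ, pow_succ,
      mul_add, Finset.mul_sum, mul_smul_comm, wprod_succ u]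
    simp only [← mul_assoc, mul_neg_one, neg_smul, neg_mul]
    rw [Finset.sum_neg_distrib]
    abel

/-- The target submodule `B^q = Σ_k ι(v k) * ⋀^{q-1}` (and `⊥` for `q = 0`). -/
def Bnd {r : ℕ} (v : Fin r → M) (q : ℕ) : Submodule A (ExteriorAlgebra A M) :=
  Submodule.span A
    {x | 1 ≤ q ∧ ∃ k : Fin r, ∃ ψ ∈ ⋀[A]^(q - 1) M, x = ExteriorAlgebra.ι A (v k) * ψ}

lemma mem_Bnd {r : ℕ} (v : Fin r → M) {q : ℕ} (hq : 1 ≤ q) (k : Fin r)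
    {ψ : ExteriorAlgebra A M} (hψ : ψ ∈ ⋀[A]^(q - 1) M) :
    ExteriorAlgebra.ι A (v k) * ψ ∈ Bnd v q :=
  Submodule.subset_span ⟨hq, k, ψ, hψ, rfl⟩

lemma Bnd_mem_of_eq {r : ℕ} {v : Fin r → M} {d d' : ℕ} (h : d = d')
    {x : ExteriorAlgebra A M} (hx : x ∈ Bnd v d) : x ∈ Bnd v d' := by
  subst h; exact hx

lemma Bnd_comp_le {r r' : ℕ} (v : Fin r → M) (τ : Fin r' → Fin r) (q : ℕ) :
    Bnd (A := A) (v ∘ τ) q ≤ Bnd v q := by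
  refine Submodule.span_mono ?_
  rintro x ⟨hq, k, ψ, hψ, rfl⟩
  exact ⟨hq, τ k, ψ, hψ, rfl⟩

/-- Lemma A: contracting a product of `s < t` of the `v`'s with anything of fixed degree
lands in `Bnd`. -/
lemma lemA : ∀ (s : ℕ) (ξ : Fin s → Module.Dual A M) {r : ℕ} (v : Fin r → M)
    {t m : ℕ} (_ : s < t) (u : Fin t → M) (_ : ∀ i, ∃ k, u i = v k)
    {y : ExteriorAlgebra A M} (_ : y ∈ ⋀[A]^m M),
    Cfold ξ (wprod u * y) ∈ Bnd v (t - s + m) := by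
  intro s
  induction s with
  | zero =>
    intro ξ r v t m hst u hu y hy
    obtain ⟨t, rfl⟩ : ∃ t', t = t' + 1 := ⟨t - 1, by omega⟩
    rw [Cfold_zero, wprod_succ]
    obtain ⟨k, hk⟩ := hu 0
    rw [hk, mul_assoc]
    refine mem_Bnd v (by omega) k ?_
    have h := mem_wedge_mul (wprod_mem (A := A) (fun i => u i.succ)) hy
    exact lam_mem_of_eq (by omega) h
  | succ s ih =>
    intro ξ r v t m hst u hu y hy
    obtain ⟨t, rfl⟩ : ∃ t', t = t' + 1 := ⟨t - 1, by omega⟩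
    rw [Cfold_succ, contract_wprod_mul, map_add, map_sum]
    refine add_mem (Submodule.sum_mem _ ?_) ?_
    · intro k _
      rw [map_smul]
      refine Submodule.smul_mem _ _ ?_
      have h := ih (fun i => ξ i.succ) v (t := t) (m := m) (by omega) (u ∘ k.succAbove)
        (fun i => hu _) hy
      exact Bnd_mem_of_eq (by omega) h
    · rw [map_smul]
      refine Submodule.smul_mem _ _ ?_
      cases m with
      | zero =>
        rw [contract_lam0 _ hy, mul_zero, map_zero]
        exact zero_mem _
      | succ m =>
        have hy' := contract_deg (ξ 0) _ hy
        have h := ih (fun i => ξ i.succ) v (t := t + 1) (m := m + 1 - 1) (by omega) u hu hy'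
        exact Bnd_mem_of_eq (by omega) h

/-- Main lemma: the full contraction of `ω₁∧⋯∧ω_r∧x` equals `det • x` modulo `Bnd`. -/
lemma lemM : ∀ (r : ℕ) (v : Fin r → M) (ξ : Fin r → Module.Dual A M) (q : ℕ)
    {x : ExteriorAlgebra A M} (_ : x ∈ ⋀[A]^q M),
    Cfold ξ (wprod v * x) - (Matrix.of fun k j => ξ j (v k)).det • x ∈ Bnd v q := by
  intro r
  induction r with
  | zero =>
    intro v ξ q x hx
    rw [Cfold_zero, wprod_zero, one_mul, Matrix.det_fin_zero, one_smul, sub_self]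
    exact zero_mem _
  | succ r ih =>
    intro v ξ q x hx
    rw [Cfold_succ, contract_wprod_mul, map_add, map_sum]
    set tξ : Fin r → Module.Dual A M := fun i => ξ i.succ with htξ
    set d : Fin (r + 1) → A :=
      fun k => (Matrix.of fun k' j' => tξ j' ((v ∘ k.succAbove) k')).det with hd
    set b : Fin (r + 1) → ExteriorAlgebra A M :=
      fun k => Cfold tξ (wprod (v ∘ k.succAbove) * x) - d k • x with hb
    have hbmem : ∀ k, b k ∈ Bnd v q := by
      intro k
      exact Bnd_comp_le v k.succAbove q (ih (v ∘ k.succAbove) tξ q hx)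
    have hkey : ∀ k : Fin (r + 1),
        Cfold tξ (wprod (v ∘ k.succAbove) * x) = d k • x + b k := by
      intro k
      exact sub_eq_iff_eq_add'.mp rfl
    set L : ExteriorAlgebra A M := Cfold tξ (wprod v * CliffordAlgebra.contractLeft (ξ 0) x)
      with hL
    have hLmem : L ∈ Bnd v q := by
      cases q with
      | zero =>
        rw [hL, contract_lam0 _ hx, mul_zero, map_zero]
        exact zero_mem _
      | succ q =>
        have hx' := contract_deg (ξ 0) _ hx
        have h := lemA r tξ v (t := r + 1) (m := q + 1 - 1) (by omega) v (fun i => ⟨i, rfl⟩) hx'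
        exact Bnd_mem_of_eq (by omega) h
    have hdet : (Matrix.of fun k j => ξ j (v k)).det
        = ∑ k : Fin (r + 1), (-1 : A) ^ (k : ℕ) * ξ 0 (v k) * d k := by
      rw [Matrix.det_succ_column_zero]
      rfl
    have hterm : ∀ k : Fin (r + 1),
        ((-1 : A) ^ (k : ℕ) * ξ 0 (v k)) • Cfold tξ (wprod (v ∘ k.succAbove) * x)
          = ((-1 : A) ^ (k : ℕ) * ξ 0 (v k) * d k) • x
            + ((-1 : A) ^ (k : ℕ) * ξ 0 (v k)) • b k := by
      intro k
      rw [hkey k, smul_add, smul_smul]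
    have hstep : (∑ k : Fin (r + 1),
            Cfold tξ (((-1 : A) ^ (k : ℕ) * ξ 0 (v k)) • (wprod (v ∘ k.succAbove) * x)))
          + Cfold tξ (((-1 : A) ^ (r + 1)) •
              (wprod v * CliffordAlgebra.contractLeft (ξ 0) x))
          - (Matrix.of fun k j => ξ j (v k)).det • x
        = (∑ k : Fin (r + 1), ((-1 : A) ^ (k : ℕ) * ξ 0 (v k)) • b k)
            + ((-1 : A) ^ (r + 1)) • L := by
      simp only [map_smul, hterm, Finset.sum_add_distrib, hdet, Finset.sum_smul, ← hL]
      abel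
    rw [hstep]
    exact add_mem
      (Submodule.sum_mem _ fun k _ => Submodule.smul_mem _ _ (hbmem k))
      (Submodule.smul_mem _ _ hLmem)

end DeRhamSaitoAux

lemma Bbound_eq_Bnd (A : Type*) [CommRing A] (n r : ℕ) (ω : Fin r → (Fin n → A)) (p : ℕ) :
    Bbound A n r ω p = DeRhamSaitoAux.Bnd ω p := by
  cases p with
  | zero =>
    rw [Bbound, DeRhamSaitoAux.Bnd]
    symm
    rw [Submodule.span_eq_bot]
    rintro x ⟨h, -⟩
    omega
  | succ p =>
    rw [Bbound, DeRhamSaitoAux.Bnd]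
    congr 1
    ext x
    simp [Nat.succ_sub_one]

/-- **de Rham–Saito lemma, part (1)**: there exists `ν ≥ 0` with `𝔞^ν ⬝ H^p = 0`
for all `0 ≤ p ≤ n`, i.e. `𝔞^ν ⬝ Z^p ⊆ B^p`. -/
theorem deRham_Saito_annihilation (A : Type*) [CommRing A] [IsNoetherianRing A]
    (n r : ℕ) (ω : Fin r → (Fin n → A)) :
    ∃ ν : ℕ, ∀ p ≤ n, ∀ a ∈ coeffIdeal A n r ω ^ ν, ∀ φ ∈ Zcycle A n r ω p,
      a • φ ∈ Bbound A n r ω p := by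
  refine ⟨1, ?_⟩
  intro p _ a ha φ hφ
  obtain ⟨hφ1, hφ2⟩ := hφ
  rw [pow_one, coeffIdeal] at ha
  rw [Bbound_eq_Bnd]
  induction ha using Submodule.span_induction with
  | mem a ha =>
    obtain ⟨ι, hι, rfl⟩ := ha
    have h := DeRhamSaitoAux.lemM r ω
      (fun j => (LinearMap.proj (ι j) : (Fin n → A) →ₗ[A] A)) p hφ1
    have hw : DeRhamSaitoAux.wprod ω = omegaWedge A n r ω := rfl
    rw [hw, hφ2, map_zero, zero_sub] at h
    have h' := neg_mem h
    rw [neg_neg] at h'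
    exact h'
  | zero =>
    rw [zero_smul]
    exact zero_mem _
  | add x y hx hy ihx ihy =>
    rw [add_smul]
    exact add_mem ihx ihy
  | smul c x hx ihx =>
    rw [smul_eq_mul, mul_smul]
    exact Submodule.smul_mem _ _ ihx
end
end

section
/- Let f ∈ ℂ[z_0, z_1, z_2] be a homogeneous polynomial of degree d ≥ 2 whose partial derivatives have no common zero in ℂ^3 ∖ {0}. If g_0, g_1, g_2 ∈ ℂ[z_0, z_1, z_2] are homogeneous polynomials of the same degree k + 1 with k ≤ d − 3 and g_0 ∂f/∂z_0 + g_1 ∂f/∂z_1 + g_2 ∂f/∂z_2 = 0, then g_0 = g_1 = g_2 = 0. Equivalently, the degree-k graded piece D_0(−log f)_k vanishes for all k ≤ d − 3. -/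
/-!
Let `f ∈ ℂ[z₀, z₁, z₂]` be homogeneous of degree `d ≥ 2` defining a smooth
plane curve. If `g₀, g₁, g₂` are homogeneous of the same degree `k + 1` with
`k ≤ d − 3` and `g₀ ∂₀f + g₁ ∂₁f + g₂ ∂₂f = 0`, then `g₀ = g₁ = g₂ = 0`;
i.e. the graded piece `D₀(−log f)_k` vanishes for `k ≤ d − 3`.
-/

noncomputable section

open MvPolynomial

/-- The polynomial ring `ℂ[z₀, z₁, z₂]`. -/
abbrev PolyRing3 := MvPolynomial (Fin 3) ℂ

namespace D0Aux

lemma degree_add (u v : Fin 3 →₀ ℕ) : (u + v).degree = u.degree + v.degree := by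
  simp [Finsupp.degree_eq_weight_one, map_add]

lemma degree_single (i : Fin 3) (n : ℕ) : (Finsupp.single i n).degree = n := by
  classical
  rcases eq_or_ne n 0 with rfl | h
  · simp [Finsupp.degree]
  · exact Finsupp.degree_single i n

lemma coeff_ne_imp {p : PolyRing3} {n : ℕ} (h : p.IsHomogeneous n) {d : Fin 3 →₀ ℕ}
    (hd : coeff d p ≠ 0) : d.degree = n := by
  by_contra hne
  exact hd (h.coeff_eq_zero hne)

lemma isHomogeneous_of {p : PolyRing3} {n : ℕ}
    (h : ∀ d : Fin 3 →₀ ℕ, coeff d p ≠ 0 → d.degree = n) : p.IsHomogeneous n := by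
  intro d hd
  rw [← h d hd]
  exact (congrFun (congrArg DFunLike.coe (Finsupp.degree_eq_weight_one (σ := Fin 3) (R := ℕ))) d).symm

lemma coeff_mul_homog_eq_zero {F a : PolyRing3} {e : ℕ} (hF : F.IsHomogeneous e)
    {m : Fin 3 →₀ ℕ} (hm : m.degree < e) : coeff m (a * F) = 0 := by
  classical
  rw [coeff_mul]
  apply Finset.sum_eq_zero
  rintro ⟨u, v⟩ huv
  rw [Finset.HasAntidiagonal.mem_antidiagonal] at huv
  by_cases hv : coeff v F = 0
  · simp [hv]
  · exfalso
    have hdv : v.degree = e := coeff_ne_imp hF hv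
    have hdm : m.degree = u.degree + v.degree := by rw [← huv, degree_add]
    omega

lemma coeff_mul_min {p q : PolyRing3} {a b : ℕ}
    (hp : ∀ u : Fin 3 →₀ ℕ, coeff u p ≠ 0 → a ≤ u.degree)
    (hq : ∀ v : Fin 3 →₀ ℕ, coeff v q ≠ 0 → b ≤ v.degree)
    {m : Fin 3 →₀ ℕ} (hm : m.degree = a + b) :
    coeff m (p * q) =
      coeff m (homogeneousComponent a p * homogeneousComponent b q) := by
  classical
  rw [coeff_mul, coeff_mul]
  apply Finset.sum_congr rfl
  rintro ⟨u, v⟩ huv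
  rw [Finset.HasAntidiagonal.mem_antidiagonal] at huv
  rw [coeff_homogeneousComponent, coeff_homogeneousComponent]
  by_cases hu : coeff u p = 0
  · by_cases h1 : u.degree = a
    · simp [hu, h1]
    · simp [hu, h1]
  by_cases hv : coeff v q = 0
  · by_cases h2 : v.degree = b
    · simp [hv, h2]
    · simp [hv, h2]
  have hdm : u.degree + v.degree = a + b := by rw [← degree_add, huv, hm]
  have hua := hp u hu
  have hvb := hq v hv
  have h1 : u.degree = a := by omega
  have h2 : v.degree = b := by omega
  simp [h1, h2]

lemma coeff_mul_max {p q : PolyRing3} {a b : ℕ}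
    (hp : ∀ u : Fin 3 →₀ ℕ, coeff u p ≠ 0 → u.degree ≤ a)
    (hq : ∀ v : Fin 3 →₀ ℕ, coeff v q ≠ 0 → v.degree ≤ b)
    {m : Fin 3 →₀ ℕ} (hm : m.degree = a + b) :
    coeff m (p * q) =
      coeff m (homogeneousComponent a p * homogeneousComponent b q) := by
  classical
  rw [coeff_mul, coeff_mul]
  apply Finset.sum_congr rfl
  rintro ⟨u, v⟩ huv
  rw [Finset.HasAntidiagonal.mem_antidiagonal] at huv
  rw [coeff_homogeneousComponent, coeff_homogeneousComponent]
  by_cases hu : coeff u p = 0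
  · by_cases h1 : u.degree = a
    · simp [hu, h1]
    · simp [hu, h1]
  by_cases hv : coeff v q = 0
  · by_cases h2 : v.degree = b
    · simp [hv, h2]
    · simp [hv, h2]
  have hdm : u.degree + v.degree = a + b := by rw [← degree_add, huv, hm]
  have hua := hp u hu
  have hvb := hq v hv
  have h1 : u.degree = a := by omega
  have h2 : v.degree = b := by omega
  simp [h1, h2]

lemma isHomogeneous_of_mul {p q : PolyRing3} {n : ℕ} (h : (p * q).IsHomogeneous n)
    (hp : p ≠ 0) (hq : q ≠ 0) :
    ∃ a b : ℕ, a + b = n ∧ p.IsHomogeneous a ∧ q.IsHomogeneous b := by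
  classical
  obtain ⟨ua, hua, hmina⟩ := p.support.exists_min_image Finsupp.degree (support_nonempty.mpr hp)
  obtain ⟨vb, hvb, hminb⟩ := q.support.exists_min_image Finsupp.degree (support_nonempty.mpr hq)
  obtain ⟨ua', hua', hmaxa⟩ := p.support.exists_max_image Finsupp.degree (support_nonempty.mpr hp)
  obtain ⟨vb', hvb', hmaxb⟩ := q.support.exists_max_image Finsupp.degree (support_nonempty.mpr hq)
  set a := ua.degree
  set b := vb.degree
  set a' := ua'.degree
  set b' := vb'.degree
  have hpmin : ∀ u : Fin 3 →₀ ℕ, coeff u p ≠ 0 → a ≤ u.degree :=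
    fun u hu => hmina u (mem_support_iff.mpr hu)
  have hqmin : ∀ v : Fin 3 →₀ ℕ, coeff v q ≠ 0 → b ≤ v.degree :=
    fun v hv => hminb v (mem_support_iff.mpr hv)
  have hpmax : ∀ u : Fin 3 →₀ ℕ, coeff u p ≠ 0 → u.degree ≤ a' :=
    fun u hu => hmaxa u (mem_support_iff.mpr hu)
  have hqmax : ∀ v : Fin 3 →₀ ℕ, coeff v q ≠ 0 → v.degree ≤ b' :=
    fun v hv => hmaxb v (mem_support_iff.mpr hv)
  have hHCa : homogeneousComponent a p ≠ 0 := by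
    rw [ne_zero_iff]
    exact ⟨ua, by rw [coeff_homogeneousComponent, if_pos rfl]; exact mem_support_iff.mp hua⟩
  have hHCb : homogeneousComponent b q ≠ 0 := by
    rw [ne_zero_iff]
    exact ⟨vb, by rw [coeff_homogeneousComponent, if_pos rfl]; exact mem_support_iff.mp hvb⟩
  have hHCa' : homogeneousComponent a' p ≠ 0 := by
    rw [ne_zero_iff]
    exact ⟨ua', by rw [coeff_homogeneousComponent, if_pos rfl]; exact mem_support_iff.mp hua'⟩
  have hHCb' : homogeneousComponent b' q ≠ 0 := by
    rw [ne_zero_iff]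
    exact ⟨vb', by rw [coeff_homogeneousComponent, if_pos rfl]; exact mem_support_iff.mp hvb'⟩
  have hab : a + b = n := by
    obtain ⟨m, hm⟩ := ne_zero_iff.mp (mul_ne_zero hHCa hHCb)
    have hdm : m.degree = a + b :=
      coeff_ne_imp ((homogeneousComponent_isHomogeneous a p).mul
        (homogeneousComponent_isHomogeneous b q)) hm
    have hne : coeff m (p * q) ≠ 0 := by rw [coeff_mul_min hpmin hqmin hdm]; exact hm
    rw [← hdm]
    exact coeff_ne_imp h hne
  have hab' : a' + b' = n := by
    obtain ⟨m, hm⟩ := ne_zero_iff.mp (mul_ne_zero hHCa' hHCb')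
    have hdm : m.degree = a' + b' :=
      coeff_ne_imp ((homogeneousComponent_isHomogeneous a' p).mul
        (homogeneousComponent_isHomogeneous b' q)) hm
    have hne : coeff m (p * q) ≠ 0 := by rw [coeff_mul_max hpmax hqmax hdm]; exact hm
    rw [← hdm]
    exact coeff_ne_imp h hne
  have haa' : a ≤ a' := hmaxa ua hua
  have hbb' : b ≤ b' := hmaxb vb hvb
  have ha : a = a' := by omega
  have hb : b = b' := by omega
  refine ⟨a, b, hab, isHomogeneous_of fun d hd => ?_, isHomogeneous_of fun d hd => ?_⟩
  · have := hpmin d hd; have := hpmax d hd; omega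
  · have := hqmin d hd; have := hqmax d hd; omega

lemma isHomogeneous_zero_degree {p : PolyRing3} (h : p.IsHomogeneous 0) :
    p = C (coeff 0 p) := by
  ext m
  rw [coeff_C]
  split_ifs with hm
  · rw [← hm]
  · exact h.coeff_eq_zero (by
      rw [Ne, Finsupp.degree_eq_zero_iff]
      exact fun h0 => hm (h0 ▸ rfl))

lemma prime_constantCoeff_eq_zero {r F : PolyRing3} (hr : Prime r) (hdvd : r ∣ F)
    (hF : F ≠ 0) {n : ℕ} (hFh : F.IsHomogeneous n) : constantCoeff r = 0 := by
  obtain ⟨w, rfl⟩ := hdvd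
  have hr0 : r ≠ 0 := left_ne_zero_of_mul hF
  have hw0 : w ≠ 0 := right_ne_zero_of_mul hF
  obtain ⟨a, b, hab, hra, hwb⟩ := isHomogeneous_of_mul hFh hr0 hw0
  rcases Nat.eq_zero_or_pos a with rfl | hpos
  · exfalso
    have hc : coeff 0 r ≠ 0 := by
      intro hc
      exact hr0 (by rw [isHomogeneous_zero_degree hra, hc, map_zero])
    have : IsUnit r := by
      rw [isHomogeneous_zero_degree hra]
      exact isUnit_iff_exists_inv.mpr ⟨C (coeff 0 r)⁻¹, by rw [← C_mul, mul_inv_cancel₀ hc, C_1]⟩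
    exact hr.not_unit this
  · rw [constantCoeff_eq]
    exact hra.coeff_eq_zero (by simp; omega)

lemma prime_X_fin3 (i : Fin 3) : Prime (X i : PolyRing3) := by
  have h0 : Prime (X 0 : PolyRing3) := by
    have h : Prime (Polynomial.X : Polynomial (MvPolynomial (Fin 2) ℂ)) := Polynomial.prime_X
    rw [← MulEquiv.prime_iff (finSuccEquiv ℂ 2).toMulEquiv (p := (X 0 : PolyRing3))]
    simpa [finSuccEquiv_X_zero] using h
  rw [← MulEquiv.prime_iff (renameEquiv ℂ (Equiv.swap (0 : Fin 3) i)).toMulEquiv (p := (X 0 : PolyRing3))] at h0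
  simpa [renameEquiv_apply, rename_X, Equiv.swap_apply_left] using h0

lemma X_not_dvd_X {i j : Fin 3} (h : i ≠ j) : ¬ (X i : PolyRing3) ∣ X j := by
  rintro ⟨w, hw⟩
  have := congrArg (eval (fun l : Fin 3 => if l = j then (1 : ℂ) else 0)) hw
  simp [eval_X, h] at this

lemma isRelPrime_X_pow {i j : Fin 3} (h : i ≠ j) {N M : ℕ} :
    IsRelPrime ((X i : PolyRing3) ^ N) ((X j : PolyRing3) ^ M) := by
  intro c hci hcj
  by_contra hcu
  have hc0 : c ≠ 0 := by
    rintro rfl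
    exact pow_ne_zero N (X_ne_zero (R := ℂ) i) (zero_dvd_iff.mp hci)
  obtain ⟨r, hr_irr, hrc⟩ := WfDvdMonoid.exists_irreducible_factor hcu hc0
  have hr : Prime r := UniqueFactorizationMonoid.irreducible_iff_prime.mp hr_irr
  have hri : r ∣ X i := hr.dvd_of_dvd_pow (hrc.trans hci)
  have hrj : r ∣ X j := hr.dvd_of_dvd_pow (hrc.trans hcj)
  have hassoc : Associated r (X i : PolyRing3) :=
    hr_irr.associated_of_dvd (prime_X_fin3 i).irreducible hri
  exact X_not_dvd_X h (hassoc.symm.dvd.trans hrj)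

lemma mem_span_X_pow_pair {N : ℕ} {q : PolyRing3} :
    q ∈ Ideal.span {(X 1 : PolyRing3) ^ N, (X 2 : PolyRing3) ^ N} ↔
      ∀ m ∈ q.support, N ≤ m 1 ∨ N ≤ m 2 := by
  classical
  constructor
  · intro hq m hm
    obtain ⟨u, v, huv⟩ := Ideal.mem_span_pair.mp hq
    rw [mem_support_iff, ← huv, coeff_add] at hm
    have : coeff m (u * X 1 ^ N) ≠ 0 ∨ coeff m (v * X 2 ^ N) ≠ 0 := by
      by_contra hc
      push_neg at hc
      rw [hc.1, hc.2] at hm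
      exact hm (by ring)
    rcases this with h | h
    · left
      rw [X_pow_eq_monomial, coeff_mul_monomial'] at h
      split_ifs at h with hle
      · exact Finsupp.single_le_iff.mp hle
      · exact absurd rfl h
    · right
      rw [X_pow_eq_monomial, coeff_mul_monomial'] at h
      split_ifs at h with hle
      · exact Finsupp.single_le_iff.mp hle
      · exact absurd rfl h
  · intro hq
    rw [q.as_sum]
    apply Ideal.sum_mem
    intro m hm
    rcases hq m hm with h | h
    · have heq : monomial m (coeff m q) =
          monomial (m - Finsupp.single 1 N) (coeff m q) * X 1 ^ N := by
        rw [X_pow_eq_monomial, monomial_mul, mul_one,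
          tsub_add_cancel_of_le (Finsupp.single_le_iff.mpr h)]
      rw [heq]
      exact Ideal.mul_mem_left _ _ (Ideal.subset_span (by simp))
    · have heq : monomial m (coeff m q) =
          monomial (m - Finsupp.single 2 N) (coeff m q) * X 2 ^ N := by
        rw [X_pow_eq_monomial, monomial_mul, mul_one,
          tsub_add_cancel_of_le (Finsupp.single_le_iff.mpr h)]
      rw [heq]
      exact Ideal.mul_mem_left _ _ (Ideal.subset_span (by simp))

lemma span_X_pow_pair_cancel {N : ℕ} {c : PolyRing3}
    (h : (X 0 : PolyRing3) ^ N * c ∈ Ideal.span {(X 1 : PolyRing3) ^ N, (X 2 : PolyRing3) ^ N}) :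
    c ∈ Ideal.span {(X 1 : PolyRing3) ^ N, (X 2 : PolyRing3) ^ N} := by
  classical
  rw [mem_span_X_pow_pair] at h ⊢
  intro m hm
  have key : coeff (m + Finsupp.single 0 N) ((X 0 : PolyRing3) ^ N * c) = coeff m c := by
    rw [mul_comm, X_pow_eq_monomial, coeff_mul_monomial', if_pos le_add_self,
      add_tsub_cancel_right, mul_one]
  have hm' := h (m + Finsupp.single 0 N)
    (mem_support_iff.mpr (by rw [key]; exact mem_support_iff.mp hm))
  simpa [Finsupp.add_apply, Finsupp.single_apply] using hm'

lemma coeff_pderiv (i : Fin 3) (p : PolyRing3) (s : Fin 3 →₀ ℕ) :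
    coeff s (pderiv i p) = ((s i + 1 : ℕ) : ℂ) * coeff (s + Finsupp.single i 1) p := by
  classical
  induction p using MvPolynomial.induction_on' with
  | monomial u a =>
    rw [pderiv_monomial, coeff_monomial, coeff_monomial]
    by_cases h : u = s + Finsupp.single i 1
    · subst h
      rw [if_pos (by rw [add_tsub_cancel_right]), if_pos rfl, Finsupp.add_apply,
        Finsupp.single_eq_same]
      push_cast
      ring
    · rw [if_neg h, mul_zero]
      split_ifs with h2
      · have hui : u i = 0 := by
          by_contra hne
          have hle : Finsupp.single i 1 ≤ u := Finsupp.single_le_iff.mpr (by omega)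
          exact h (by rw [← tsub_add_cancel_of_le hle, h2])
        simp [hui]
      · rfl
  | add p q hp hq =>
    rw [map_add, coeff_add, coeff_add, hp, hq, mul_add]

lemma saturation {F0 F1 h : PolyRing3} {N : ℕ} (hF1 : F1 ≠ 0)
    (hrp : IsRelPrime F1 F0)
    (h0 : (X 0 : PolyRing3) ^ N * h ∈ Ideal.span {F0, F1})
    (h1 : (X 1 : PolyRing3) ^ N * h ∈ Ideal.span {F0, F1})
    (h2 : (X 2 : PolyRing3) ^ N * h ∈ Ideal.span {F0, F1}) :
    h ∈ Ideal.span {F0, F1} := by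
  set P : PolyRing3 := (X 0 : PolyRing3) ^ N with hPdef
  set Q : PolyRing3 := (X 1 : PolyRing3) ^ N with hQdef
  set R : PolyRing3 := (X 2 : PolyRing3) ^ N with hRdef
  have hP0 : P ≠ 0 := pow_ne_zero _ (X_ne_zero _)
  have hQ0 : Q ≠ 0 := pow_ne_zero _ (X_ne_zero _)
  have hR0 : R ≠ 0 := pow_ne_zero _ (X_ne_zero _)
  have hPQ : IsRelPrime P Q := isRelPrime_X_pow (by decide)
  have hRQ : IsRelPrime R Q := isRelPrime_X_pow (by decide)
  obtain ⟨a0, b0, E0⟩ := Ideal.mem_span_pair.mp h0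
  obtain ⟨a1, b1, E1⟩ := Ideal.mem_span_pair.mp h1
  obtain ⟨a2, b2, E2⟩ := Ideal.mem_span_pair.mp h2
  -- extract c2, c1, c0
  obtain ⟨c2, hc2⟩ : F1 ∣ Q * a0 - P * a1 :=
    hrp.dvd_of_dvd_mul_right (x := F1) (z := F0) (y := Q * a0 - P * a1)
      ⟨P * b1 - Q * b0, by linear_combination Q * E0 - P * E1⟩
  obtain ⟨c1, hc1⟩ : F1 ∣ R * a0 - P * a2 :=
    hrp.dvd_of_dvd_mul_right (x := F1) (z := F0) (y := R * a0 - P * a2)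
      ⟨P * b2 - R * b0, by linear_combination R * E0 - P * E2⟩
  obtain ⟨c0, hc0⟩ : F1 ∣ R * a1 - Q * a2 :=
    hrp.dvd_of_dvd_mul_right (x := F1) (z := F0) (y := R * a1 - Q * a2)
      ⟨Q * b2 - R * b1, by linear_combination R * E1 - Q * E2⟩
  -- Koszul-type relation among c's
  have hS2 : P * c0 = Q * c1 - R * c2 := by
    have hz : F1 * (P * c0 - Q * c1 + R * c2) = 0 := by
      linear_combination (-P) * hc0 + Q * hc1 + (-R) * hc2
    rcases mul_eq_zero.mp hz with h | h
    · exact absurd h hF1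
    · linear_combination h
  -- descend: c0 ∈ (Q, R)
  have hc0mem : c0 ∈ Ideal.span {Q, R} :=
    span_X_pow_pair_cancel (Ideal.mem_span_pair.mpr ⟨c1, -c2, by linear_combination -hS2⟩)
  obtain ⟨α, β, hαβ⟩ := Ideal.mem_span_pair.mp hc0mem
  obtain ⟨γ, hγ⟩ : R ∣ c1 - P * α :=
    hRQ.dvd_of_dvd_mul_right (x := R) (z := Q) (y := c1 - P * α)
      ⟨c2 + P * β, by linear_combination -hS2 - P * hαβ⟩
  have hc2' : c2 + P * β = Q * γ := by
    have : R * (c2 + P * β) = R * (Q * γ) := by linear_combination hS2 + P * hαβ + Q * hγ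
    exact mul_left_cancel₀ hR0 this
  -- t
  obtain ⟨t, ht⟩ : P ∣ a0 - F1 * γ :=
    hPQ.dvd_of_dvd_mul_right (x := P) (z := Q) (y := a0 - F1 * γ)
      ⟨a1 - F1 * β, by linear_combination hc2 + F1 * hc2'⟩
  have ht1 : a1 - F1 * β = Q * t := by
    have : P * (a1 - F1 * β) = P * (Q * t) := by
      linear_combination -hc2 - F1 * hc2' + Q * ht
    exact mul_left_cancel₀ hP0 this
  -- final descent
  have h5a : P * (h - t * F0) = (γ * F0 + b0) * F1 := by linear_combination -E0 + F0 * ht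
  have h5b : Q * (h - t * F0) = (β * F0 + b1) * F1 := by linear_combination -E1 + F0 * ht1
  obtain ⟨r, hr⟩ : P ∣ γ * F0 + b0 :=
    hPQ.dvd_of_dvd_mul_right (x := P) (z := Q) (y := γ * F0 + b0)
      ⟨β * F0 + b1, by
        have : (γ * F0 + b0) * Q * F1 = (β * F0 + b1) * P * F1 := by
          linear_combination P * h5b - Q * h5a
        have := mul_right_cancel₀ hF1 this
        linear_combination this⟩
  have hfinal : h = t * F0 + (r * F1) := by
    have : P * (h - t * F0) = P * (r * F1) := by linear_combination h5a + F1 * hr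
    have := mul_left_cancel₀ hP0 this
    linear_combination this
  exact Ideal.mem_span_pair.mpr ⟨t, r, by linear_combination -hfinal⟩

lemma mem_span_triple {a b c x : PolyRing3} :
    x ∈ Ideal.span {a, b, c} ↔ ∃ u v w, u * a + v * b + w * c = x := by
  constructor
  · intro hx
    rw [show ({a, b, c} : Set PolyRing3) = insert a {b, c} from rfl,
      Ideal.mem_span_insert] at hx
    obtain ⟨u, z, hz, rfl⟩ := hx
    obtain ⟨v, w, hvw⟩ := Ideal.mem_span_pair.mp hz
    exact ⟨u, v, w, by rw [← hvw]; ring⟩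
  · rintro ⟨u, v, w, rfl⟩
    have ha : a ∈ Ideal.span ({a, b, c} : Set PolyRing3) := Ideal.subset_span (by simp)
    have hb : b ∈ Ideal.span ({a, b, c} : Set PolyRing3) := Ideal.subset_span (by simp)
    have hc : c ∈ Ideal.span ({a, b, c} : Set PolyRing3) := Ideal.subset_span (by simp)
    exact Ideal.add_mem _ (Ideal.add_mem _ (Ideal.mul_mem_left _ _ ha)
      (Ideal.mul_mem_left _ _ hb)) (Ideal.mul_mem_left _ _ hc)

end D0Aux

open D0Aux

theorem D0_graded_piece_vanishes (d : ℕ) (hd : 2 ≤ d)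
    (f : PolyRing3) (hf : f.IsHomogeneous d)
    (hsm : ∀ z : Fin 3 → ℂ, (∀ i, eval z (pderiv i f) = 0) → z = 0)
    (k : ℕ) (hk : k + 3 ≤ d)
    (g : Fin 3 → PolyRing3) (hg : ∀ i, (g i).IsHomogeneous (k + 1))
    (hrel : ∑ i, g i * pderiv i f = 0) :
    ∀ i, g i = 0 := by
  classical
  set F : Fin 3 → PolyRing3 := fun i => pderiv i f with hFdef
  -- homogeneity of the partials
  have hFhom : ∀ i, (F i).IsHomogeneous (d - 1) := by
    intro i
    apply isHomogeneous_of
    intro s hs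
    rw [coeff_pderiv] at hs
    have hne : coeff (s + Finsupp.single i 1) f ≠ 0 := right_ne_zero_of_mul hs
    have := coeff_ne_imp hf hne
    rw [degree_add, degree_single] at this
    omega
  -- the partials are nonzero
  have hFne : ∀ i, F i ≠ 0 := by
    intro i hFi
    have hsupp : ∀ m : Fin 3 →₀ ℕ, coeff m f ≠ 0 → m i = 0 := by
      intro m hm
      by_contra hmi
      have hle : Finsupp.single i 1 ≤ m := Finsupp.single_le_iff.mpr (by omega)
      have hkey := coeff_pderiv i f (m - Finsupp.single i 1)
      rw [tsub_add_cancel_of_le hle] at hkey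
      rw [show (pderiv i f : PolyRing3) = 0 from hFi, coeff_zero] at hkey
      rcases mul_eq_zero.mp hkey.symm with h | h
      · norm_cast at h
      · exact hm h
    set z : Fin 3 → ℂ := fun l => if l = i then 1 else 0 with hzdef
    have hz : ∀ j, eval z (pderiv j f) = 0 := by
      intro j
      rw [eval_eq]
      apply Finset.sum_eq_zero
      intro m hm
      have hmc : coeff m (pderiv j f) ≠ 0 := mem_support_iff.mp hm
      rw [coeff_pderiv] at hmc
      have hne : coeff (m + Finsupp.single j 1) f ≠ 0 := right_ne_zero_of_mul hmc
      have hdeg : (m + Finsupp.single j 1).degree = d := coeff_ne_imp hf hne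
      rw [degree_add, degree_single] at hdeg
      have hmi : m i = 0 := by
        have := hsupp _ hne
        rcases eq_or_ne i j with rfl | hij
        · rw [Finsupp.add_apply, Finsupp.single_eq_same] at this
          omega
        · rwa [Finsupp.add_apply, Finsupp.single_apply, if_neg (by exact fun h => hij h.symm),
            add_zero] at this
      have hm0 : m ≠ 0 := by
        intro h0
        rw [h0, map_zero] at hdeg
        omega
      obtain ⟨l, hl⟩ : ∃ l, m l ≠ 0 := by
        by_contra hc
        push_neg at hc
        exact hm0 (Finsupp.ext fun l => hc l)
      have hli : l ≠ i := fun h => hl (h ▸ hmi)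
      apply mul_eq_zero_of_right
      apply Finset.prod_eq_zero (Finsupp.mem_support_iff.mpr hl)
      rw [hzdef]
      simp only [if_neg hli]
      exact zero_pow hl
    have := congrFun (hsm z hz) i
    rw [hzdef] at this
    simp at this
  -- Nullstellensatz: powers of variables lie in the Jacobian ideal
  set I : Ideal PolyRing3 := Ideal.span {F 0, F 1, F 2} with hIdef
  have hXrad : ∀ i : Fin 3, ∃ n : ℕ, (X i : PolyRing3) ^ n ∈ I := by
    intro i
    have : (X i : PolyRing3) ∈ I.radical := by
      rw [← vanishingIdeal_zeroLocus_eq_radical (K := ℂ)]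
      rw [mem_vanishingIdeal_iff]
      intro x hx
      have hx0 : x = 0 := by
        apply hsm
        intro j
        have hFj : F j ∈ I := by
          apply Ideal.subset_span
          fin_cases j <;> simp
        exact mem_zeroLocus_iff.mp hx (F j) hFj
      rw [aeval_X, hx0]
      rfl
    exact this
  obtain ⟨n0, hn0⟩ := hXrad 0
  obtain ⟨n1, hn1⟩ := hXrad 1
  obtain ⟨n2, hn2⟩ := hXrad 2
  set N : ℕ := n0 + n1 + n2 + 1 with hNdef
  have hXN : ∀ i : Fin 3, (X i : PolyRing3) ^ N ∈ I := by
    intro i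
    fin_cases i
    · rw [show N = (N - n0) + n0 by omega, pow_add]
      exact Ideal.mul_mem_left _ _ hn0
    · rw [show N = (N - n1) + n1 by omega, pow_add]
      exact Ideal.mul_mem_left _ _ hn1
    · rw [show N = (N - n2) + n2 by omega, pow_add]
      exact Ideal.mul_mem_left _ _ hn2
  -- coprimality of the first two partials
  have hrp : IsRelPrime (F 0) (F 1) := by
    intro c hc0 hc1
    by_contra hcu
    have hcne : c ≠ 0 := fun h => hFne 0 (zero_dvd_iff.mp (h ▸ hc0))
    obtain ⟨r, hr_irr, hrc⟩ := WfDvdMonoid.exists_irreducible_factor hcu hcne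
    have hr : Prime r := UniqueFactorizationMonoid.irreducible_iff_prime.mp hr_irr
    have hrF0 : r ∣ F 0 := hrc.trans hc0
    have hrF1 : r ∣ F 1 := hrc.trans hc1
    have hrcc : constantCoeff r = 0 :=
      prime_constantCoeff_eq_zero hr hrF0 (hFne 0) (hFhom 0)
    by_cases hrF2 : r ∣ F 2
    · have hIr : I ≤ Ideal.span {r} := by
        rw [hIdef, Ideal.span_le]
        rintro x hx
        simp only [Set.mem_insert_iff, Set.mem_singleton_iff] at hx
        rcases hx with rfl | rfl | rfl
        · exact Ideal.mem_span_singleton.mpr hrF0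
        · exact Ideal.mem_span_singleton.mpr hrF1
        · exact Ideal.mem_span_singleton.mpr hrF2
      have h0 : r ∣ (X 0 : PolyRing3) :=
        hr.dvd_of_dvd_pow (Ideal.mem_span_singleton.mp (hIr (hXN 0)))
      have h1 : r ∣ (X 1 : PolyRing3) :=
        hr.dvd_of_dvd_pow (Ideal.mem_span_singleton.mp (hIr (hXN 1)))
      have hassoc : Associated r (X 0 : PolyRing3) :=
        hr_irr.associated_of_dvd (prime_X_fin3 0).irreducible h0
      exact X_not_dvd_X (show (0 : Fin 3) ≠ 1 by decide) (hassoc.symm.dvd.trans h1)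
    · have hrpF2 : IsRelPrime r (F 2) := by
        intro e her he2
        obtain ⟨w, rfl⟩ := her
        rcases hr_irr.isUnit_or_isUnit rfl with h | h
        · exact h
        · exfalso
          apply hrF2
          obtain ⟨wu, rfl⟩ := h
          exact Dvd.dvd.trans ⟨(wu⁻¹ : PolyRing3ˣ), by
            rw [mul_assoc]
            simp⟩ he2
      have hsub : I ≤ Ideal.span {F 2, r} := by
        rw [hIdef, Ideal.span_le]
        rintro x hx
        simp only [Set.mem_insert_iff, Set.mem_singleton_iff] at hx
        obtain ⟨w0, hw0⟩ := hrF0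
        obtain ⟨w1, hw1⟩ := hrF1
        rcases hx with rfl | rfl | rfl
        · exact Ideal.mem_span_pair.mpr ⟨0, w0, by rw [hw0]; ring⟩
        · exact Ideal.mem_span_pair.mpr ⟨0, w1, by rw [hw1]; ring⟩
        · exact Ideal.mem_span_pair.mpr ⟨1, 0, by ring⟩
      have hone : (1 : PolyRing3) ∈ Ideal.span {F 2, r} := by
        apply saturation (hr.ne_zero) hrpF2 (N := N) <;>
          · rw [mul_one]; exact hsub (hXN _)
      obtain ⟨u, v, huv⟩ := Ideal.mem_span_pair.mp hone
      have hccF2 : constantCoeff (F 2) = 0 := by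
        rw [constantCoeff_eq]
        exact (hFhom 2).coeff_eq_zero (by rw [map_zero]; omega)
      have := congrArg constantCoeff huv
      rw [map_add, map_mul, map_mul, hrcc, hccF2, mul_zero, mul_zero, add_zero, map_one] at this
      exact zero_ne_one this
  -- the relation, expanded
  rw [Fin.sum_univ_three] at hrel
  have hrelF : g 0 * F 0 + g 1 * F 1 + g 2 * F 2 = 0 := hrel
  -- g 2 lies in (F 0, F 1)
  have hg2J : g 2 ∈ Ideal.span {F 0, F 1} := by
    apply saturation (hFne 1) hrp.symm (N := N) <;>
    · obtain ⟨u0, u1, u2, hu⟩ := mem_span_triple.mp (hXN _)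
      exact Ideal.mem_span_pair.mpr ⟨u0 * g 2 - u2 * g 0, u1 * g 2 - u2 * g 1, by
        linear_combination g 2 * hu - u2 * hrelF⟩
  -- degree reasons: g 2 = 0
  have hdlt : k + 1 < d - 1 := by omega
  have hg2 : g 2 = 0 := by
    obtain ⟨a, b, hab⟩ := Ideal.mem_span_pair.mp hg2J
    ext m
    rw [coeff_zero]
    rcases lt_or_ge m.degree (d - 1) with hlt | hge
    · rw [← hab, coeff_add, coeff_mul_homog_eq_zero (hFhom 0) hlt,
        coeff_mul_homog_eq_zero (hFhom 1) hlt, add_zero]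
    · exact (hg 2).coeff_eq_zero (by omega)
  -- g 1 = 0
  have hdvd1 : F 0 ∣ g 1 :=
    hrp.dvd_of_dvd_mul_right (x := F 0) (z := F 1) (y := g 1)
      ⟨-(g 0), by linear_combination hrelF - F 2 * hg2⟩
  obtain ⟨w, hw⟩ := hdvd1
  have hg1 : g 1 = 0 := by
    ext m
    rw [coeff_zero]
    rcases lt_or_ge m.degree (d - 1) with hlt | hge
    · rw [hw, mul_comm, coeff_mul_homog_eq_zero (hFhom 0) hlt]
    · exact (hg 1).coeff_eq_zero (by omega)
  have hg0 : g 0 = 0 := by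
    have hz : g 0 * F 0 = 0 := by
      linear_combination hrelF - F 1 * hg1 - F 2 * hg2
    rcases mul_eq_zero.mp hz with h | h
    · exact h
    · exact absurd h (hFne 0)
  intro i
  fin_cases i <;> assumption
end
end

section
/- Let t ∈ ℂ with t^3 ≠ 1 and let f_t = z_0^3 + z_1^3 + z_2^3 − 3t z_0 z_1 z_2 be the Hesse cubic. For a nonzero linear form α = α_0 z_0 + α_1 z_1 + α_2 z_2, there exist (a_0, a_1, a_2) ∈ ℂ^3 ∖ {0} and a linear form β with a_0 ∂f_t/∂z_0 + a_1 ∂f_t/∂z_1 + a_2 ∂f_t/∂z_2 = α · β if and only if t(α_0^3 + α_1^3 + α_2^3) − (t^3 + 2) α_0 α_1 α_2 = 0. In other words, the Cayleyan curve of the Hesse cubic f_t is the cubic curve in the dual projective plane defined by t(α_0^3 + α_1^3 + α_2^3) − (t^3 + 2) α_0 α_1 α_2. -/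
/-!
The Cayleyan curve of the Hesse cubic
`f_t = z₀³ + z₁³ + z₂³ − 3t z₀z₁z₂` (with `t³ ≠ 1`) is the cubic
`t(α₀³ + α₁³ + α₂³) − (t³ + 2) α₀α₁α₂ = 0` in the dual projective plane:
a nonzero linear form `α` divides some nontrivial linear combination of the
partial derivatives of `f_t` if and only if its coefficients satisfy this
equation.
-/

noncomputable section

open MvPolynomial

/-- The linear form with coefficient vector `α`. -/
def linForm (α : Fin 3 → ℂ) : PolyRing3 := ∑ i, C (α i) * X i

/-- The Hesse cubic `f_t = z₀³ + z₁³ + z₂³ − 3t z₀z₁z₂`. -/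
def hesse (t : ℂ) : PolyRing3 :=
  X 0 ^ 3 + X 1 ^ 3 + X 2 ^ 3 - C (3 * t) * (X 0 * X 1 * X 2)

lemma pd3 (i : Fin 3) : pderiv i (3 : PolyRing3) = 0 := by
  have : (3 : PolyRing3) = C 3 := (map_ofNat C 3).symm
  rw [this, pderiv_C]

lemma hesse_expand (t : ℂ) (a : Fin 3 → ℂ) :
    ∑ i, C (a i) * pderiv i (hesse t) =
      C (3 * a 0) * X 0 ^ 2 + C (3 * a 1) * X 1 ^ 2 + C (3 * a 2) * X 2 ^ 2
      - C (3 * t * a 0) * (X 1 * X 2) - C (3 * t * a 1) * (X 0 * X 2)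
      - C (3 * t * a 2) * (X 0 * X 1) := by
  simp only [hesse, Fin.sum_univ_three, map_add, map_sub, map_mul, pderiv_C, pderiv_X,
    pderiv_mul, pderiv_pow, pd3]
  simp [Pi.single_apply, map_mul, map_ofNat]
  ring

/-- The Cayleyan matrix of linear conditions. -/
def cayM (t : ℂ) (α : Fin 3 → ℂ) : Matrix (Fin 3) (Fin 3) ℂ :=
  !![α 1, α 0, t * α 2; α 2, t * α 1, α 0; t * α 0, α 2, α 1]

lemma cayM_det (t : ℂ) (α : Fin 3 → ℂ) :
    (cayM t α).det = t * (α 0 ^ 3 + α 1 ^ 3 + α 2 ^ 3) - (t ^ 3 + 2) * (α 0 * α 1 * α 2) := by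
  simp [cayM, Matrix.det_fin_three]
  ring

lemma cayM_mulVec (t : ℂ) (α b : Fin 3 → ℂ)
    (E1 : α 1 * b 0 + α 0 * b 1 + t * α 2 * b 2 = 0)
    (E2 : α 2 * b 0 + t * α 1 * b 1 + α 0 * b 2 = 0)
    (E3 : t * α 0 * b 0 + α 2 * b 1 + α 1 * b 2 = 0) :
    (cayM t α).mulVec b = 0 := by
  funext i
  fin_cases i <;>
    simp [cayM, Matrix.mulVec, dotProduct, Fin.sum_univ_three] <;>
    [linear_combination E1; linear_combination E2; linear_combination E3]

lemma cayM_eqs (t : ℂ) (α b : Fin 3 → ℂ) (h : (cayM t α).mulVec b = 0) :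
    (α 1 * b 0 + α 0 * b 1 + t * α 2 * b 2 = 0) ∧
    (α 2 * b 0 + t * α 1 * b 1 + α 0 * b 2 = 0) ∧
    (t * α 0 * b 0 + α 2 * b 1 + α 1 * b 2 = 0) := by
  have h0 := congrFun h 0
  have h1 := congrFun h 1
  have h2 := congrFun h 2
  simp [cayM, Matrix.mulVec, dotProduct, Fin.sum_univ_three] at h0 h1 h2
  exact ⟨by linear_combination h0, by linear_combination h1, by linear_combination h2⟩

lemma identity_of (t : ℂ) (α b : Fin 3 → ℂ)
    (E1 : α 1 * b 0 + α 0 * b 1 + t * α 2 * b 2 = 0)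
    (E2 : α 2 * b 0 + t * α 1 * b 1 + α 0 * b 2 = 0)
    (E3 : t * α 0 * b 0 + α 2 * b 1 + α 1 * b 2 = 0) :
    ∑ i, C ((fun j => α j * b j) i) * pderiv i (hesse t)
      = linForm α * linForm (fun j => 3 * b j) := by
  rw [hesse_expand]
  have h1 : (C (α 1 * b 0 + α 0 * b 1 + t * α 2 * b 2) : PolyRing3) = 0 := by
    rw [E1]; exact map_zero _
  have h2 : (C (α 2 * b 0 + t * α 1 * b 1 + α 0 * b 2) : PolyRing3) = 0 := by
    rw [E2]; exact map_zero _
  have h3 : (C (t * α 0 * b 0 + α 2 * b 1 + α 1 * b 2) : PolyRing3) = 0 := by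
    rw [E3]; exact map_zero _
  simp only [map_add, map_mul, map_ofNat] at h1 h2 h3 ⊢
  have c3 : (C (3:ℂ) : PolyRing3) = 3 := map_ofNat C 3
  simp only [linForm, Fin.sum_univ_three, map_mul]
  simp only [c3]
  linear_combination (-(3:PolyRing3) * (X 0 * X 1)) * h1 + (-(3:PolyRing3) * (X 0 * X 2)) * h2
    + (-(3:PolyRing3) * (X 1 * X 2)) * h3

theorem cayleyan_of_hesse (t : ℂ) (ht : t ^ 3 ≠ 1)
    (α : Fin 3 → ℂ) (hα : α ≠ 0) :
    (∃ a : Fin 3 → ℂ, a ≠ 0 ∧ ∃ b : Fin 3 → ℂ,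
        ∑ i, C (a i) * pderiv i (hesse t) = linForm α * linForm b) ↔
      t * (α 0 ^ 3 + α 1 ^ 3 + α 2 ^ 3) - (t ^ 3 + 2) * (α 0 * α 1 * α 2) = 0 := by
  constructor
  · rintro ⟨a, ha, b, h⟩
    rw [hesse_expand] at h
    have v1 := congrArg (eval ![(1:ℂ),0,0]) h
    have v2 := congrArg (eval ![(0:ℂ),1,0]) h
    have v3 := congrArg (eval ![(0:ℂ),0,1]) h
    have v4 := congrArg (eval ![(1:ℂ),1,0]) h
    have v5 := congrArg (eval ![(1:ℂ),0,1]) h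
    have v6 := congrArg (eval ![(0:ℂ),1,1]) h
    simp [linForm, Fin.sum_univ_three] at v1 v2 v3 v4 v5 v6
    have E1 : α 1 * b 0 + α 0 * b 1 + t * α 2 * b 2 = 0 := by
      linear_combination v1 + v2 - v4 - t*v3
    have E2 : α 2 * b 0 + t * α 1 * b 1 + α 0 * b 2 = 0 := by
      linear_combination v1 + v3 - v5 - t*v2
    have E3 : t * α 0 * b 0 + α 2 * b 1 + α 1 * b 2 = 0 := by
      linear_combination v2 + v3 - v6 - t*v1
    have hb : b ≠ 0 := by
      intro hb0
      subst hb0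
      apply ha
      funext i
      fin_cases i <;> simp at v1 v2 v3 ⊢ <;> assumption
    have hdet : (cayM t α).det = 0 :=
      Matrix.exists_mulVec_eq_zero_iff.mp ⟨b, hb, cayM_mulVec t α b E1 E2 E3⟩
    rw [cayM_det] at hdet
    exact hdet
  · intro hC
    have hdet : (cayM t α).det = 0 := by rw [cayM_det]; exact hC
    obtain ⟨b, hb, hMv⟩ := Matrix.exists_mulVec_eq_zero_iff.mpr hdet
    obtain ⟨E1, E2, E3⟩ := cayM_eqs t α b hMv
    refine ⟨fun j => α j * b j, ?_, fun j => 3 * b j, identity_of t α b E1 E2 E3⟩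
    -- nontriviality of `a`
    intro ha
    have p0 : α 0 * b 0 = 0 := congrFun ha 0
    have p1 : α 1 * b 1 = 0 := congrFun ha 1
    have p2 : α 2 * b 2 = 0 := congrFun ha 2
    obtain ⟨j, hbj⟩ := Function.ne_iff.mp hb
    apply hα
    have key : α 0 = 0 ∧ α 1 = 0 ∧ α 2 = 0 := by
      fin_cases j <;> simp at hbj
      · have a0 : α 0 = 0 := by
          rcases mul_eq_zero.mp p0 with h | h
          · exact h
          · exact absurd h hbj
        have a1 : α 1 = 0 := by
          have : α 1 * b 0 = 0 := by linear_combination E1 - b 1 * a0 - t * p2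
          rcases mul_eq_zero.mp this with h | h
          · exact h
          · exact absurd h hbj
        have a2 : α 2 = 0 := by
          have : α 2 * b 0 = 0 := by linear_combination E2 - t * p1 - b 2 * a0
          rcases mul_eq_zero.mp this with h | h
          · exact h
          · exact absurd h hbj
        exact ⟨a0, a1, a2⟩
      · have a1 : α 1 = 0 := by
          rcases mul_eq_zero.mp p1 with h | h
          · exact h
          · exact absurd h hbj
        have a0 : α 0 = 0 := by
          have : α 0 * b 1 = 0 := by linear_combination E1 - b 0 * a1 - t * p2
          rcases mul_eq_zero.mp this with h | h
          · exact h
          · exact absurd h hbj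
        have a2 : α 2 = 0 := by
          have : α 2 * b 1 = 0 := by linear_combination E3 - t * p0 - b 2 * a1
          rcases mul_eq_zero.mp this with h | h
          · exact h
          · exact absurd h hbj
        exact ⟨a0, a1, a2⟩
      · have a2 : α 2 = 0 := by
          rcases mul_eq_zero.mp p2 with h | h
          · exact h
          · exact absurd h hbj
        have a0 : α 0 = 0 := by
          have : α 0 * b 2 = 0 := by linear_combination E2 - b 0 * a2 - t * p1
          rcases mul_eq_zero.mp this with h | h
          · exact h
          · exact absurd h hbj
        have a1 : α 1 = 0 := by
          have : α 1 * b 2 = 0 := by linear_combination E3 - t * p0 - b 1 * a2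
          rcases mul_eq_zero.mp this with h | h
          · exact h
          · exact absurd h hbj
        exact ⟨a0, a1, a2⟩
    funext i
    fin_cases i <;> simp [key.1, key.2.1, key.2.2]
end
end

section
/- Let t ∈ ℂ with t^3 ≠ 1 and let f_t = z_0^3 + z_1^3 + z_2^3 − 3t z_0 z_1 z_2. A homogeneous cubic g = Σ_{0 ≤ i ≤ j ≤ k ≤ 2} a_{ijk} z_i z_j z_k ∈ ℂ[z_0, z_1, z_2] lies in the degree-3 part J(f_t)_3 of the Jacobi ideal of f_t if and only if a_{012} + t(a_{000} + a_{111} + a_{222}) = 0. In particular, J(f_t)_3 is a hyperplane in the 10-dimensional space of cubic forms. -/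
/-!
For the Hesse cubic `f_t = z₀³ + z₁³ + z₂³ − 3t z₀z₁z₂` with `t³ ≠ 1`, a
homogeneous cubic `g = Σ_{i≤j≤k} a_{ijk} zᵢzⱼz_k` lies in the degree-3 part
of the Jacobi ideal `J(f_t)` if and only if
`a₀₁₂ + t(a₀₀₀ + a₁₁₁ + a₂₂₂) = 0`.
-/

noncomputable section

open MvPolynomial

/-- Exponent vector `(a, b, c)` as a finsupp on `Fin 3`. -/
def sM (a b c : ℕ) : Fin 3 →₀ ℕ :=
  Finsupp.single 0 a + Finsupp.single 1 b + Finsupp.single 2 c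

lemma sM_apply0 (a b c : ℕ) : sM a b c 0 = a := by simp [sM, Finsupp.single_apply]
lemma sM_apply1 (a b c : ℕ) : sM a b c 1 = b := by simp [sM, Finsupp.single_apply]
lemma sM_apply2 (a b c : ℕ) : sM a b c 2 = c := by simp [sM, Finsupp.single_apply]

lemma sM_add (a b c a' b' c' : ℕ) : sM a b c + sM a' b' c' = sM (a+a') (b+b') (c+c') := by
  ext i; fin_cases i <;> simp [sM_apply0, sM_apply1, sM_apply2]

lemma sM_eq (a b c a' b' c' : ℕ) : sM a b c = sM a' b' c' ↔ a = a' ∧ b = b' ∧ c = c' := by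
  constructor
  · intro h
    refine ⟨?_, ?_, ?_⟩
    · rw [← sM_apply0 a b c, h, sM_apply0]
    · rw [← sM_apply1 a b c, h, sM_apply1]
    · rw [← sM_apply2 a b c, h, sM_apply2]
  · rintro ⟨rfl, rfl, rfl⟩; rfl

lemma sM_le (a b c a' b' c' : ℕ) : sM a b c ≤ sM a' b' c' ↔ a ≤ a' ∧ b ≤ b' ∧ c ≤ c' := by
  rw [Finsupp.le_def]
  constructor
  · intro h
    exact ⟨by simpa [sM_apply0] using h 0, by simpa [sM_apply1] using h 1,
      by simpa [sM_apply2] using h 2⟩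
  · rintro ⟨h1, h2, h3⟩ i
    fin_cases i <;> simpa [sM_apply0, sM_apply1, sM_apply2]

lemma sM_sub (a b c a' b' c' : ℕ) : sM a b c - sM a' b' c' = sM (a-a') (b-b') (c-c') := by
  ext i; fin_cases i <;>
    simp [Finsupp.tsub_apply, sM_apply0, sM_apply1, sM_apply2]

lemma eq_sM (m : Fin 3 →₀ ℕ) : m = sM (m 0) (m 1) (m 2) := by
  ext i; fin_cases i <;> simp [sM_apply0, sM_apply1, sM_apply2]

lemma degree_eq (m : Fin 3 →₀ ℕ) : m.degree = m 0 + m 1 + m 2 := by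
  rw [Finsupp.degree_apply,
    Finset.sum_subset (Finset.subset_univ m.support)
      (fun i _ hi => Finsupp.notMem_support_iff.mp hi),
    Fin.sum_univ_three]

lemma sM_degree (a b c : ℕ) : (sM a b c).degree = a + b + c := by
  rw [degree_eq, sM_apply0, sM_apply1, sM_apply2]

lemma mono1 (i : Fin 3) (n : ℕ) (r : ℂ) :
    (monomial (Finsupp.single i n) r : PolyRing3) = C r * X i ^ n := by
  rw [X_pow_eq_monomial, C_mul_monomial, mul_one]

lemma mono2 (i j : Fin 3) (r : ℂ) :
    (monomial (Finsupp.single i 1 + Finsupp.single j 1) r : PolyRing3) = C r * X i * X j := by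
  rw [show (X i : PolyRing3) = monomial (Finsupp.single i 1) 1 from rfl,
    show (X j : PolyRing3) = monomial (Finsupp.single j 1) 1 from rfl,
    C_mul_monomial, monomial_mul, mul_one, mul_one]

lemma hf0 (t : ℂ) : pderiv 0 (hesse t)
    = monomial (sM 2 0 0) 3 + monomial (sM 0 1 1) (-(3*t)) := by
  rw [show sM 2 0 0 = Finsupp.single 0 2 by simp [sM],
    show sM 0 1 1 = Finsupp.single 1 1 + Finsupp.single 2 1 by simp [sM], mono1, mono2]
  simp [hesse]
  rw [show (C 3 : PolyRing3) = 3 from map_ofNat C 3]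
  ring

lemma hf1 (t : ℂ) : pderiv 1 (hesse t)
    = monomial (sM 0 2 0) 3 + monomial (sM 1 0 1) (-(3*t)) := by
  rw [show sM 0 2 0 = Finsupp.single 1 2 by simp [sM],
    show sM 1 0 1 = Finsupp.single 0 1 + Finsupp.single 2 1 by simp [sM], mono1, mono2]
  simp [hesse]
  rw [show (C 3 : PolyRing3) = 3 from map_ofNat C 3]
  ring

lemma hf2 (t : ℂ) : pderiv 2 (hesse t)
    = monomial (sM 0 0 2) 3 + monomial (sM 1 1 0) (-(3*t)) := by
  rw [show sM 0 0 2 = Finsupp.single 2 2 by simp [sM],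
    show sM 1 1 0 = Finsupp.single 0 1 + Finsupp.single 1 1 by simp [sM], mono1, mono2]
  simp [hesse]
  rw [show (C 3 : PolyRing3) = 3 from map_ofNat C 3]
  ring

lemma enum3 (a b c : ℕ) (h : a + b + c = 3) :
    (a=3∧b=0∧c=0)∨(a=0∧b=3∧c=0)∨(a=0∧b=0∧c=3)∨(a=2∧b=1∧c=0)∨(a=2∧b=0∧c=1)∨(a=1∧b=2∧c=0)∨
    (a=0∧b=2∧c=1)∨(a=1∧b=0∧c=2)∨(a=0∧b=1∧c=2)∨(a=1∧b=1∧c=1) := by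
  have ha : a ≤ 3 := by omega
  have hb : b ≤ 3 := by omega
  have hc : c ≤ 3 := by omega
  interval_cases a <;> interval_cases b <;> interval_cases c <;>
    first | (exfalso; omega) | decide

set_option maxHeartbeats 4000000 in
theorem hesse_jacobi_hyperplane (t : ℂ) (ht : t ^ 3 ≠ 1)
    (g : PolyRing3) (hg : g.IsHomogeneous 3) :
    g ∈ Ideal.span (Set.range fun i => pderiv i (hesse t)) ↔
      coeff (Finsupp.single 0 1 + Finsupp.single 1 1 + Finsupp.single 2 1) g +
        t * (coeff (Finsupp.single 0 3) g + coeff (Finsupp.single 1 3) g +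
          coeff (Finsupp.single 2 3) g) = 0 := by
  have hs111 : (Finsupp.single 0 1 + Finsupp.single 1 1 + Finsupp.single 2 1 : Fin 3 →₀ ℕ)
      = sM 1 1 1 := rfl
  have hs0 : (Finsupp.single (0 : Fin 3) 3) = sM 3 0 0 := by simp [sM]
  have hs1 : (Finsupp.single (1 : Fin 3) 3) = sM 0 3 0 := by simp [sM]
  have hs2 : (Finsupp.single (2 : Fin 3) 3) = sM 0 0 3 := by simp [sM]
  rw [hs111, hs0, hs1, hs2]
  constructor
  · intro hmem
    rw [Ideal.mem_span_range_iff_exists_fun] at hmem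
    obtain ⟨c, hc⟩ := hmem
    rw [← hc, Fin.sum_univ_three, hf0, hf1, hf2]
    simp only [mul_add, coeff_add, coeff_mul_monomial', sM_le, sM_sub]
    norm_num
    ring
  · intro hcoeff
    have hkne : (3 : ℂ) * (1 - t^3) ≠ 0 :=
      mul_ne_zero (by norm_num) (sub_ne_zero.mpr (Ne.symm ht))
    set b1 := coeff (sM 2 1 0) g with hb1
    set b2 := coeff (sM 0 2 1) g with hb2
    set b3 := coeff (sM 1 0 2) g with hb3
    set d1 := coeff (sM 2 0 1) g with hd1
    set d2 := coeff (sM 0 1 2) g with hd2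
    set d3 := coeff (sM 1 2 0) g with hd3
    have key :
        (monomial (sM 1 0 0) ((1-t^3) * coeff (sM 3 0 0) g)
          + monomial (sM 0 1 0) (b1 + t*b3 + t^2*b2)
          + monomial (sM 0 0 1) (d1 + t*d3 + t^2*d2)) * pderiv 0 (hesse t)
        + (monomial (sM 0 1 0) ((1-t^3) * coeff (sM 0 3 0) g)
          + monomial (sM 0 0 1) (b2 + t*b1 + t^2*b3)
          + monomial (sM 1 0 0) (d3 + t*d2 + t^2*d1)) * pderiv 1 (hesse t)
        + (monomial (sM 0 0 1) ((1-t^3) * coeff (sM 0 0 3) g)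
          + monomial (sM 1 0 0) (b3 + t*b2 + t^2*b1)
          + monomial (sM 0 1 0) (d2 + t*d1 + t^2*d3)) * pderiv 2 (hesse t)
        = C (3*(1-t^3)) * g := by
      rw [hf0, hf1, hf2]
      simp only [mul_add, add_mul, monomial_mul, sM_add]
      refine MvPolynomial.ext _ _ fun m => ?_
      by_cases hm : m.degree = 3
      · have h3 : m 0 + m 1 + m 2 = 3 := by rw [← degree_eq]; exact hm
        rw [eq_sM m]
        rcases enum3 _ _ _ h3 with ⟨h1,h2,h3'⟩|⟨h1,h2,h3'⟩|⟨h1,h2,h3'⟩|⟨h1,h2,h3'⟩|⟨h1,h2,h3'⟩|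
          ⟨h1,h2,h3'⟩|⟨h1,h2,h3'⟩|⟨h1,h2,h3'⟩|⟨h1,h2,h3'⟩|⟨h1,h2,h3'⟩ <;>
          rw [h1, h2, h3'] <;>
          simp only [coeff_add, coeff_monomial, coeff_C_mul, sM_eq, Nat.reduceAdd,
            Nat.reduceEqDiff, and_true, true_and, and_false, false_and, if_true, if_false,
            reduceIte, add_zero, zero_add] <;>
          first
            | ring1
            | linear_combination (-3*(1-t^3)) * hcoeff
      · have hR : (C (3*(1-t^3)) * g : PolyRing3).IsHomogeneous 3 :=
          (isHomogeneous_C (Fin 3) (3*(1-t^3))).mul hg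
        rw [hR.coeff_eq_zero hm]
        refine MvPolynomial.IsHomogeneous.coeff_eq_zero ?_ hm
        repeat' apply MvPolynomial.IsHomogeneous.add
        all_goals exact isHomogeneous_monomial _ (by simp [sM_degree])
    have hmem : C (3*(1-t^3)) * g ∈ Ideal.span (Set.range fun i => pderiv i (hesse t)) := by
      rw [← key]
      have hf : ∀ i : Fin 3,
          pderiv i (hesse t) ∈ Ideal.span (Set.range fun i => pderiv i (hesse t)) :=
        fun i => Ideal.subset_span ⟨i, rfl⟩
      exact Ideal.add_mem _
        (Ideal.add_mem _ (Ideal.mul_mem_left _ _ (hf 0)) (Ideal.mul_mem_left _ _ (hf 1)))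
        (Ideal.mul_mem_left _ _ (hf 2))
    have hginv : g = C (3*(1-t^3))⁻¹ * (C (3*(1-t^3)) * g) := by
      rw [← mul_assoc, ← C_mul, inv_mul_cancel₀ hkne, C_1, one_mul]
    rw [hginv]
    exact Ideal.mul_mem_left _ _ hmem
end
end

section
/- Let a, b, c ∈ ℂ^× and let f = a z_0^3 + b z_1^3 + c z_2^3. For a nonzero linear form α = α_0 z_0 + α_1 z_1 + α_2 z_2, there exist (a_0, a_1, a_2) ∈ ℂ^3 ∖ {0} and a linear form β with a_0 ∂f/∂z_0 + a_1 ∂f/∂z_1 + a_2 ∂f/∂z_2 = α · β if and only if α_0 α_1 α_2 = 0. In other words, every member of the family {a z_0^3 + b z_1^3 + c z_2^3 = 0}, a, b, c ∈ ℂ^×, has the same Cayleyan curve, namely the union of the three coordinate lines α_0 α_1 α_2 = 0 in the dual projective plane. -/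
/-!
For `a, b, c ∈ ℂ^×` and `f = a z₀³ + b z₁³ + c z₂³`, a nonzero linear form `α`
divides some nontrivial linear combination of the partial derivatives of `f`
if and only if `α₀α₁α₂ = 0`: every member of this family has the same Cayleyan
curve, the union of the three coordinate lines in the dual projective plane.
-/

noncomputable section

open MvPolynomial

theorem cayleyan_of_fermat_family (a b c : ℂ) (ha : a ≠ 0) (hb : b ≠ 0) (hc : c ≠ 0)
    (α : Fin 3 → ℂ) (hα : α ≠ 0) :
    (∃ v : Fin 3 → ℂ, v ≠ 0 ∧ ∃ β : Fin 3 → ℂ,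
        ∑ i, C (v i) * pderiv i (C a * X 0 ^ 3 + C b * X 1 ^ 3 + C c * X 2 ^ 3) =
          linForm α * linForm β) ↔
      α 0 * α 1 * α 2 = 0 := by
  constructor
  · rintro ⟨v, hv, β, h⟩
    by_contra hne
    have h0 : α 0 ≠ 0 := fun h' => hne (by simp [h'])
    have h1 : α 1 ≠ 0 := fun h' => hne (by simp [h'])
    have h2 : α 2 ≠ 0 := fun h' => hne (by simp [h'])
    have key : ∀ x : Fin 3 → ℂ,
        v 0 * (a * (3 * x 0 ^ 2)) + v 1 * (b * (3 * x 1 ^ 2)) + v 2 * (c * (3 * x 2 ^ 2)) =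
          (α 0 * x 0 + α 1 * x 1 + α 2 * x 2) * (β 0 * x 0 + β 1 * x 1 + β 2 * x 2) := by
      intro x
      have h2 := congrArg (eval x) h
      simpa [linForm, Fin.sum_univ_three, pderiv_C_mul] using h2
    have k0 := key ![1, 0, 0]
    have k1 := key ![0, 1, 0]
    have k2 := key ![0, 0, 1]
    have k01 := key ![1, 1, 0]
    have k02 := key ![1, 0, 1]
    have k12 := key ![0, 1, 1]
    simp [Matrix.cons_val_zero, Matrix.cons_val_one] at k0 k1 k2 k01 k02 k12
    have e2 : α 0 * β 1 + α 1 * β 0 = 0 := by linear_combination k0 + k1 - k01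
    have e3 : α 0 * β 2 + α 2 * β 0 = 0 := by linear_combination k0 + k2 - k02
    have e4 : α 1 * β 2 + α 2 * β 1 = 0 := by linear_combination k1 + k2 - k12
    have hβ0 : β 0 = 0 := by
      have h5 : 2 * (α 1 * α 2 * β 0) = 0 := by
        linear_combination α 1 * e3 - α 0 * e4 + α 2 * e2
      have h6 : α 1 * α 2 * β 0 = 0 := by linear_combination h5 / 2
      rcases mul_eq_zero.mp h6 with h' | h'
      · exact absurd h' (mul_ne_zero h1 h2)
      · exact h'
    have hβ1 : β 1 = 0 := by
      have : α 0 * β 1 = 0 := by linear_combination e2 - α 1 * hβ0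
      exact (mul_eq_zero.mp this).resolve_left h0
    have hβ2 : β 2 = 0 := by
      have : α 0 * β 2 = 0 := by linear_combination e3 - α 2 * hβ0
      exact (mul_eq_zero.mp this).resolve_left h0
    apply hv
    have hv0 : v 0 = 0 := by
      have : v 0 * (a * 3) = 0 := by linear_combination k0 + α 0 * hβ0
      rcases mul_eq_zero.mp this with h' | h'
      · exact h'
      · exact absurd h' (mul_ne_zero ha three_ne_zero)
    have hv1 : v 1 = 0 := by
      have : v 1 * (b * 3) = 0 := by linear_combination k1 + α 1 * hβ1
      rcases mul_eq_zero.mp this with h' | h'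
      · exact h'
      · exact absurd h' (mul_ne_zero hb three_ne_zero)
    have hv2 : v 2 = 0 := by
      have : v 2 * (c * 3) = 0 := by linear_combination k2 + α 2 * hβ2
      rcases mul_eq_zero.mp this with h' | h'
      · exact h'
      · exact absurd h' (mul_ne_zero hc three_ne_zero)
    funext i
    fin_cases i <;> simp [hv0, hv1, hv2]
  · intro hprod
    rcases mul_eq_zero.mp hprod with hprod' | h2
    · rcases mul_eq_zero.mp hprod' with h0 | h1
      · -- α 0 = 0
        refine ⟨![0, c * α 1 ^ 2, -(b * α 2 ^ 2)], ?_, ![0, 3 * b * c * α 1, -(3 * b * c * α 2)], ?_⟩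
        · intro hv0
          apply hα
          have e1 : c * α 1 ^ 2 = 0 := congrFun hv0 1
          have e2 : -(b * α 2 ^ 2) = 0 := congrFun hv0 2
          have hα1 : α 1 = 0 := by
            have := (mul_eq_zero.mp e1).resolve_left hc
            exact pow_eq_zero_iff (n := 2) (by norm_num) |>.mp this
          have hα2 : α 2 = 0 := by
            have := (mul_eq_zero.mp (neg_eq_zero.mp e2)).resolve_left hb
            exact pow_eq_zero_iff (n := 2) (by norm_num) |>.mp this
          funext i; fin_cases i <;> simp [h0, hα1, hα2]
        · have hC3 : (C (3:ℂ) : PolyRing3) = 3 := map_ofNat _ 3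
          simp [linForm, Fin.sum_univ_three, pderiv_C_mul, h0, Matrix.cons_val_two,
            Matrix.tail_cons, map_mul, map_pow, map_neg, hC3]
          ring
      · -- α 1 = 0
        refine ⟨![c * α 0 ^ 2, 0, -(a * α 2 ^ 2)], ?_, ![3 * a * c * α 0, 0, -(3 * a * c * α 2)], ?_⟩
        · intro hv0
          apply hα
          have e1 : c * α 0 ^ 2 = 0 := congrFun hv0 0
          have e2 : -(a * α 2 ^ 2) = 0 := congrFun hv0 2
          have hα0 : α 0 = 0 := by
            have := (mul_eq_zero.mp e1).resolve_left hc
            exact pow_eq_zero_iff (n := 2) (by norm_num) |>.mp this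
          have hα2 : α 2 = 0 := by
            have := (mul_eq_zero.mp (neg_eq_zero.mp e2)).resolve_left ha
            exact pow_eq_zero_iff (n := 2) (by norm_num) |>.mp this
          funext i; fin_cases i <;> simp [h1, hα0, hα2]
        · have hC3 : (C (3:ℂ) : PolyRing3) = 3 := map_ofNat _ 3
          simp [linForm, Fin.sum_univ_three, pderiv_C_mul, h1, Matrix.cons_val_two,
            Matrix.tail_cons, map_mul, map_pow, map_neg, hC3]
          ring
    · -- α 2 = 0
      refine ⟨![b * α 0 ^ 2, -(a * α 1 ^ 2), 0], ?_, ![3 * a * b * α 0, -(3 * a * b * α 1), 0], ?_⟩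
      · intro hv0
        apply hα
        have e1 : b * α 0 ^ 2 = 0 := congrFun hv0 0
        have e2 : -(a * α 1 ^ 2) = 0 := congrFun hv0 1
        have hα0 : α 0 = 0 := by
          have := (mul_eq_zero.mp e1).resolve_left hb
          exact pow_eq_zero_iff (n := 2) (by norm_num) |>.mp this
        have hα1 : α 1 = 0 := by
          have := (mul_eq_zero.mp (neg_eq_zero.mp e2)).resolve_left ha
          exact pow_eq_zero_iff (n := 2) (by norm_num) |>.mp this
        funext i; fin_cases i <;> simp [h2, hα0, hα1]
      · have hC3 : (C (3:ℂ) : PolyRing3) = 3 := map_ofNat _ 3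
        simp [linForm, Fin.sum_univ_three, pderiv_C_mul, h2, Matrix.cons_val_two,
          Matrix.tail_cons, map_mul, map_pow, map_neg, hC3]
        ring
end
end

section
/- Let A = ℂ[z_0, z_1, z_2] and let a, b, c, a', b', c' ∈ ℂ^×. Set f = a z_0^3 + b z_1^3 + c z_2^3 and g = a' z_0^3 + b' z_1^3 + c' z_2^3. Then the graded A-modules D_0(−log f) and D_0(−log g) are isomorphic as graded A-modules. In particular, since distinct triples (a, b, c) up to scalar give distinct curves, smooth plane cubics with vanishing j-invariant are not Torelli: the sheaf of logarithmic vector fields does not determine the curve. -/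
/-!
**Failure of Torelli for cubics with vanishing `j`-invariant.**

For `a, b, c, a', b', c' ∈ ℂ^×`, the graded `A`-modules `D₀(−log f)` and
`D₀(−log g)` of logarithmic vector fields along `f = a z₀³ + b z₁³ + c z₂³`
and `g = a' z₀³ + b' z₁³ + c' z₂³` are isomorphic as graded `A`-modules:
there is an `A`-linear equivalence preserving homogeneous components in both
directions. (A derivation is homogeneous of degree `k` when each coefficient
`δ(zᵢ)` is homogeneous of degree `k + 1`.)
-/

noncomputable section

open MvPolynomial

/-- `D₀(−log f) = {δ ∈ Der_ℂ(A) ∣ δ f = 0}` as an `A`-submodule of derivations. -/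
def Dlog0 (f : PolyRing3) : Submodule PolyRing3 (Derivation ℂ PolyRing3 PolyRing3) where
  carrier := {δ | δ f = 0}
  add_mem' := fun {δ₁ δ₂} h₁ h₂ => by
    simp only [Set.mem_setOf_eq, Derivation.add_apply] at *
    simp [h₁, h₂]
  zero_mem' := by simp
  smul_mem' := fun c δ h => by
    simp only [Set.mem_setOf_eq, Derivation.smul_apply] at *
    simp [h]

/-- Rescaling a derivation coordinatewise by constants, as an `A`-linear map. -/
def scaleDer (s : Fin 3 → ℂ) :
    Derivation ℂ PolyRing3 PolyRing3 →ₗ[PolyRing3] Derivation ℂ PolyRing3 PolyRing3 where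
  toFun δ := mkDerivation ℂ (fun i => C (s i) * δ (X i))
  map_add' δ₁ δ₂ := derivation_ext fun i => by
    simp [mkDerivation_X, mul_add]
  map_smul' p δ := derivation_ext fun i => by
    simp [mkDerivation_X, smul_eq_mul]
    ring

lemma scaleDer_X (s : Fin 3 → ℂ) (δ : Derivation ℂ PolyRing3 PolyRing3) (i : Fin 3) :
    scaleDer s δ (X i) = C (s i) * δ (X i) := mkDerivation_X _ _ _

lemma scaleDer_scaleDer (s t : Fin 3 → ℂ) (δ : Derivation ℂ PolyRing3 PolyRing3) :
    scaleDer s (scaleDer t δ) = scaleDer (fun i => s i * t i) δ :=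
  derivation_ext fun i => by simp [scaleDer_X, mul_assoc]

lemma scaleDer_one (δ : Derivation ℂ PolyRing3 PolyRing3) :
    scaleDer (fun _ => 1) δ = δ :=
  derivation_ext fun i => by simp [scaleDer_X]

lemma der_cubic (u v w : ℂ) (δ : Derivation ℂ PolyRing3 PolyRing3) :
    δ (C u * X 0 ^ 3 + C v * X 1 ^ 3 + C w * X 2 ^ 3) =
      C (3 * u) * X 0 ^ 2 * δ (X 0) + C (3 * v) * X 1 ^ 2 * δ (X 1)
        + C (3 * w) * X 2 ^ 2 * δ (X 2) := by
  simp [derivation_C_mul, Derivation.leibniz_pow, smul_eq_mul, C_mul, map_ofNat]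
  ring

lemma scaleDer_cubic (u v w u' v' w' : ℂ) (hu' : u' ≠ 0) (hv' : v' ≠ 0) (hw' : w' ≠ 0)
    (δ : Derivation ℂ PolyRing3 PolyRing3) :
    scaleDer ![u / u', v / v', w / w'] δ (C u' * X 0 ^ 3 + C v' * X 1 ^ 3 + C w' * X 2 ^ 3)
      = δ (C u * X 0 ^ 3 + C v * X 1 ^ 3 + C w * X 2 ^ 3) := by
  have e0 : (C (3 * u') * C (u / u') : PolyRing3) = C (3 * u) := by
    rw [← C_mul]; congr 1; field_simp
  have e1 : (C (3 * v') * C (v / v') : PolyRing3) = C (3 * v) := by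
    rw [← C_mul]; congr 1; field_simp
  have e2 : (C (3 * w') * C (w / w') : PolyRing3) = C (3 * w) := by
    rw [← C_mul]; congr 1; field_simp
  rw [der_cubic, der_cubic]
  simp only [scaleDer_X, Matrix.cons_val_zero, Matrix.cons_val_one, Matrix.head_cons,
    Matrix.cons_val_two, Matrix.tail_cons]
  calc C (3 * u') * X 0 ^ 2 * (C (u / u') * δ (X 0)) + C (3 * v') * X 1 ^ 2 * (C (v / v') * δ (X 1))
        + C (3 * w') * X 2 ^ 2 * (C (w / w') * δ (X 2))
      = (C (3 * u') * C (u / u')) * X 0 ^ 2 * δ (X 0)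
        + (C (3 * v') * C (v / v')) * X 1 ^ 2 * δ (X 1)
        + (C (3 * w') * C (w / w')) * X 2 ^ 2 * δ (X 2) := by ring
    _ = _ := by rw [e0, e1, e2]

theorem not_torelli_fermat_family
    (a b c a' b' c' : ℂ) (ha : a ≠ 0) (hb : b ≠ 0) (hc : c ≠ 0)
    (ha' : a' ≠ 0) (hb' : b' ≠ 0) (hc' : c' ≠ 0) :
    ∃ e : Dlog0 (C a * X 0 ^ 3 + C b * X 1 ^ 3 + C c * X 2 ^ 3) ≃ₗ[PolyRing3]
          Dlog0 (C a' * X 0 ^ 3 + C b' * X 1 ^ 3 + C c' * X 2 ^ 3),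
      (∀ (m : ℕ) (δ : Dlog0 (C a * X 0 ^ 3 + C b * X 1 ^ 3 + C c * X 2 ^ 3)),
        (∀ i, ((δ : Derivation ℂ PolyRing3 PolyRing3) (X i)).IsHomogeneous m) →
        ∀ i, ((e δ : Derivation ℂ PolyRing3 PolyRing3) (X i)).IsHomogeneous m) ∧
      (∀ (m : ℕ) (δ : Dlog0 (C a' * X 0 ^ 3 + C b' * X 1 ^ 3 + C c' * X 2 ^ 3)),
        (∀ i, ((δ : Derivation ℂ PolyRing3 PolyRing3) (X i)).IsHomogeneous m) →
        ∀ i, ((e.symm δ : Derivation ℂ PolyRing3 PolyRing3) (X i)).IsHomogeneous m) := by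
  set f : PolyRing3 := C a * X 0 ^ 3 + C b * X 1 ^ 3 + C c * X 2 ^ 3 with hf
  set g : PolyRing3 := C a' * X 0 ^ 3 + C b' * X 1 ^ 3 + C c' * X 2 ^ 3 with hg
  set s : Fin 3 → ℂ := ![a / a', b / b', c / c'] with hs
  set t : Fin 3 → ℂ := ![a' / a, b' / b, c' / c] with ht
  have hst : (fun i => s i * t i) = fun _ => (1 : ℂ) := by
    funext i; fin_cases i <;> simp [hs, ht] <;> field_simp
  have hts : (fun i => t i * s i) = fun _ => (1 : ℂ) := by
    funext i; fin_cases i <;> simp [hs, ht] <;> field_simp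
  let e0 : Derivation ℂ PolyRing3 PolyRing3 ≃ₗ[PolyRing3] Derivation ℂ PolyRing3 PolyRing3 :=
    LinearEquiv.ofLinear (scaleDer s) (scaleDer t)
      (LinearMap.ext fun δ => by
        simp only [LinearMap.comp_apply, LinearMap.id_apply]
        rw [scaleDer_scaleDer, hst, scaleDer_one])
      (LinearMap.ext fun δ => by
        simp only [LinearMap.comp_apply, LinearMap.id_apply]
        rw [scaleDer_scaleDer, hts, scaleDer_one])
  have mem_iff : ∀ (h : PolyRing3) (δ : Derivation ℂ PolyRing3 PolyRing3),
      δ ∈ Dlog0 h ↔ δ h = 0 := fun _ _ => Iff.rfl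
  have key₁ : ∀ δ : Derivation ℂ PolyRing3 PolyRing3, scaleDer s δ g = δ f := fun δ => by
    rw [hs, hg, scaleDer_cubic a b c a' b' c' ha' hb' hc', ← hf]
  have key₂ : ∀ δ : Derivation ℂ PolyRing3 PolyRing3, scaleDer t δ f = δ g := fun δ => by
    rw [ht, hf, scaleDer_cubic a' b' c' a b c ha hb hc, ← hg]
  have hmap : (Dlog0 f).map (e0 : Derivation ℂ PolyRing3 PolyRing3 →ₗ[PolyRing3]
      Derivation ℂ PolyRing3 PolyRing3) = Dlog0 g := by
    apply le_antisymm
    · rintro δ' ⟨δ, hδ, rfl⟩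
      have hδ0 : δ f = 0 := hδ
      show scaleDer s δ g = 0
      rw [key₁, hδ0]
    · intro δ hδ
      have hδ0 : δ g = 0 := hδ
      refine ⟨scaleDer t δ, ?_, ?_⟩
      · show scaleDer t δ f = 0
        rw [key₂, hδ0]
      · show scaleDer s (scaleDer t δ) = δ
        rw [scaleDer_scaleDer, hst, scaleDer_one]
  refine ⟨e0.ofSubmodules _ _ hmap, ?_, ?_⟩
  · intro m δ hδ i
    have : ((e0.ofSubmodules _ _ hmap δ : Derivation ℂ PolyRing3 PolyRing3)) =
        scaleDer s (δ : Derivation ℂ PolyRing3 PolyRing3) :=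
      LinearEquiv.ofSubmodules_apply _ _ _
    rw [this, scaleDer_X]
    exact zero_add m ▸ (isHomogeneous_C _ _).mul (hδ i)
  · intro m δ hδ i
    have : (((e0.ofSubmodules _ _ hmap).symm δ : Derivation ℂ PolyRing3 PolyRing3)) =
        scaleDer t (δ : Derivation ℂ PolyRing3 PolyRing3) :=
      LinearEquiv.ofSubmodules_symm_apply e0 hmap δ
    rw [this, scaleDer_X]
    exact zero_add m ▸ (isHomogeneous_C _ _).mul (hδ i)
end
end
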